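/- arXiv:1909.12353 — 4 statements merged into one kernel-verified Lean document; each statement's English description precedes it below -/
import Mathlib

section
/- Let H be a hypergraph and w₁ a configuration on H. Then w₁ is a stabilizing configuration for the annihilating random walk on H if and only if the GF(2) system H(w₁, 0), with variables z_e per hyperedge e and equations Σ_{e∋v} z_e = w₁(v) for each vertex v, has a solution. -/
def arwMove {V : Type*} [DecidableEq V] (E : Finset (Finset V))
    (w w' : V → ZMod 2) : Prop :=
  ∃ e ∈ E, (∃ v ∈ e, w v = 1) ∧ w' = fun u => if u ∈ e then w u + 1 else w u

section Aux
variable {V : Type*} [Fintype V] [DecidableEq V]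

lemma arw_sum_update (E : Finset (Finset V)) (z : Finset V → ZMod 2) (e : Finset V)
    (he : e ∈ E) (u : V) :
    ∑ f ∈ E.filter (fun f => u ∈ f), Function.update z e (z e + 1) f
      = (∑ f ∈ E.filter (fun f => u ∈ f), z f) + (if u ∈ e then 1 else 0) := by
  have h : ∀ f ∈ E.filter (fun f => u ∈ f),
      Function.update z e (z e + 1) f = z f + (if f = e then 1 else 0) := by
    intro f _
    rcases eq_or_ne f e with rfl | hne
    · simp
    · simp [Function.update_of_ne hne, hne]
  rw [Finset.sum_congr rfl h, Finset.sum_add_distrib, Finset.sum_ite_eq' _ e (fun _ => (1 : ZMod 2))]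
  simp [he]

lemma arw_solv_iff (E : Finset (Finset V)) {w w' : V → ZMod 2} (hm : arwMove E w w') :
    (∃ z : Finset V → ZMod 2, ∀ v, ∑ e ∈ E.filter (fun e => v ∈ e), z e = w v) ↔
    (∃ z : Finset V → ZMod 2, ∀ v, ∑ e ∈ E.filter (fun e => v ∈ e), z e = w' v) := by
  obtain ⟨e, he, -, rfl⟩ := hm
  constructor
  · rintro ⟨z, hz⟩
    exact ⟨Function.update z e (z e + 1), fun u => by
      rw [arw_sum_update E z e he u, hz u]
      by_cases hu : u ∈ e <;> simp [hu]⟩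
  · rintro ⟨z, hz⟩
    refine ⟨Function.update z e (z e + 1), fun u => ?_⟩
    rw [arw_sum_update E z e he u, hz u]
    by_cases hu : u ∈ e
    · simp only [if_pos hu]
      have h2 : (1 : ZMod 2) + 1 = 0 := by decide
      rw [add_assoc, h2, add_zero]
    · simp [hu]

lemma arw_rtg_solv (E : Finset (Finset V)) {w w' : V → ZMod 2}
    (h : Relation.ReflTransGen (arwMove E) w w') :
    (∃ z : Finset V → ZMod 2, ∀ v, ∑ e ∈ E.filter (fun e => v ∈ e), z e = w v) ↔
    (∃ z : Finset V → ZMod 2, ∀ v, ∑ e ∈ E.filter (fun e => v ∈ e), z e = w' v) := by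
  induction h with
  | refl => rfl
  | tail _ step ih => exact ih.trans (arw_solv_iff E step)

lemma arw_reach_zero (E : Finset (Finset V)) :
    ∀ n (z : Finset V → ZMod 2) (w : V → ZMod 2),
      (E.filter (fun f => z f = 1)).card = n →
      (∀ v, ∑ e ∈ E.filter (fun e => v ∈ e), z e = w v) →
      Relation.ReflTransGen (arwMove E) w (fun _ => 0) := by
  intro n
  induction n using Nat.strong_induction_on with
  | _ n ih =>
    intro z w hcard hz
    by_cases hw : ∀ v, w v = 0
    · have : w = fun _ => 0 := funext hw
      rw [this]
    · push_neg at hw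
      obtain ⟨v, hv⟩ := hw
      have hv1 : w v = 1 := by
        have : ∀ a : ZMod 2, a ≠ 0 → a = 1 := by decide
        exact this _ hv
      -- find an edge in the support containing v
      have hsum : ∑ e ∈ E.filter (fun e => v ∈ e), z e = 1 := by rw [hz v, hv1]
      have : ∃ e ∈ E.filter (fun e => v ∈ e), z e ≠ 0 := by
        by_contra hcon
        push_neg at hcon
        rw [Finset.sum_eq_zero hcon] at hsum
        exact absurd hsum (by decide)
      obtain ⟨e, heF, hze⟩ := this
      have he : e ∈ E := (Finset.mem_filter.mp heF).1
      have hve : v ∈ e := (Finset.mem_filter.mp heF).2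
      have hze1 : z e = 1 := by
        have : ∀ a : ZMod 2, a ≠ 0 → a = 1 := by decide
        exact this _ hze
      set w' : V → ZMod 2 := fun u => if u ∈ e then w u + 1 else w u with hw'
      have hmove : arwMove E w w' := ⟨e, he, ⟨v, hve, hv1⟩, rfl⟩
      set z' := Function.update z e (z e + 1) with hz'
      have hz'sol : ∀ u, ∑ f ∈ E.filter (fun f => u ∈ f), z' f = w' u := by
        intro u
        rw [hz', arw_sum_update E z e he u, hz u, hw']
        by_cases hu : u ∈ e <;> simp [hu]
      have hfilter : E.filter (fun f => z' f = 1) = (E.filter (fun f => z f = 1)).erase e := by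
        ext f
        rcases eq_or_ne f e with rfl | hne
        · simp [hz', hze1]
        · simp [hz', Function.update_of_ne hne, hne]
      have hlt : (E.filter (fun f => z' f = 1)).card < n := by
        rw [hfilter]
        calc ((E.filter (fun f => z f = 1)).erase e).card
            < (E.filter (fun f => z f = 1)).card :=
              Finset.card_erase_lt_of_mem (by simp [he, hze1])
          _ = n := hcard
      exact Relation.ReflTransGen.head hmove
        (ih _ hlt z' w' rfl hz'sol)

end Aux

/-- A configuration `w₁` is stabilizing for the annihilating random walk on `H` iff the
all-zero configuration is reachable from `w₁` and from every configuration reachable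
from `w₁`. This holds iff the GF(2) system `H(w₁, 0)`, with a variable `z_e` per
hyperedge and equations `∑_{e ∋ v} z_e = w₁(v)`, has a solution. -/
theorem stmt_11 {V : Type*} [Fintype V] [DecidableEq V]
    (E : Finset (Finset V)) (w₁ : V → ZMod 2) :
    (∀ w' : V → ZMod 2, Relation.ReflTransGen (arwMove E) w₁ w' →
        Relation.ReflTransGen (arwMove E) w' (fun _ => 0)) ↔
      ∃ z : Finset V → ZMod 2,
        ∀ v : V, ∑ e ∈ E.filter (fun e => v ∈ e), z e = w₁ v := by
  constructor
  · intro h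
    have h0 := h w₁ Relation.ReflTransGen.refl
    exact (arw_rtg_solv E h0).mpr ⟨0, fun v => by simp⟩
  · rintro ⟨z, hz⟩ w' hreach
    obtain ⟨z', hz'⟩ := (arw_rtg_solv E hreach).mp ⟨z, hz⟩
    exact arw_reach_zero E _ z' w' rfl hz'
end

section
/- There is a connected hypergraph H with no edges of size 2 and configurations w₁, w₂ : V(H) → GF(2) such that the system H(w₁,w₂) has a GF(2) solution but w₂ is not reachable from w₁. Concretely: H has three 3-element hyperedges e₁,e₂,e₃ sharing a single common vertex c; w₁ is 1 exactly on the two private vertices of e₂; w₂ is 1 on all vertices except c. -/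
/-- One hyperedge-flip move: choose a hyperedge containing a vertex labeled 1 and flip
all labels on that hyperedge. -/
def flipMove {V : Type*} [DecidableEq V] (E : Finset (Finset V))
    (w w' : V → ZMod 2) : Prop :=
  ∃ e ∈ E, (∃ v ∈ e, w v = 1) ∧ w' = fun u => if u ∈ e then w u + 1 else w u

private def EE : Finset (Finset (Fin 7)) := {({0, 1, 2} : Finset (Fin 7)), {0, 3, 4}, {0, 5, 6}}

private def sa : Fin 7 → ZMod 2 := fun v => if v = 3 ∨ v = 4 then 1 else 0
private def sb : Fin 7 → ZMod 2 := fun v => if v = 0 then 1 else 0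
private def sc : Fin 7 → ZMod 2 := fun v => if v = 1 ∨ v = 2 then 1 else 0
private def sd : Fin 7 → ZMod 2 := fun v => if v = 5 ∨ v = 6 then 1 else 0

private def P (w : Fin 7 → ZMod 2) : Prop := w = sa ∨ w = sb ∨ w = sc ∨ w = sd

set_option maxRecDepth 100000 in
private lemma step {w w' : Fin 7 → ZMod 2} (h : flipMove EE w w') (hw : P w) : P w' := by
  obtain ⟨e, he, ⟨v, hv, hv1⟩, rfl⟩ := h
  rcases hw with rfl | rfl | rfl | rfl <;>
    revert he hv hv1 <;>
    revert e v <;> (unfold P; decide)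

private lemma inv {w : Fin 7 → ZMod 2}
    (h : Relation.ReflTransGen (flipMove EE) sa w) : P w := by
  induction h with
  | refl => left; rfl
  | tail _ hstep ih => exact step hstep ih

set_option maxRecDepth 4000 in
/-- A connected hypergraph with no graph edges for which the system `H(w₁,w₂)` has a
GF(2) solution, yet `w₂` is not reachable from `w₁`: three 3-element hyperedges
`e₁ = {0,1,2}`, `e₂ = {0,3,4}`, `e₃ = {0,5,6}` sharing the common vertex `0`; `w₁` is 1
exactly on the private vertices `3, 4` of `e₂`, and `w₂` is 1 everywhere except at `0`. -/
theorem stmt_12 :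
    (∀ e ∈ ({({0, 1, 2} : Finset (Fin 7)), {0, 3, 4}, {0, 5, 6}} : Finset (Finset (Fin 7))),
      e.card = 3) ∧
    (∃ z : Finset (Fin 7) → ZMod 2,
      ∀ v : Fin 7,
        ∑ e ∈ (({({0, 1, 2} : Finset (Fin 7)), {0, 3, 4}, {0, 5, 6}} :
            Finset (Finset (Fin 7))).filter (fun e => v ∈ e)), z e =
          (fun v : Fin 7 => if v = 0 then (0 : ZMod 2) else 1) v -
          (fun v : Fin 7 => if v = 3 ∨ v = 4 then (1 : ZMod 2) else 0) v) ∧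
    ¬ Relation.ReflTransGen
        (flipMove ({({0, 1, 2} : Finset (Fin 7)), {0, 3, 4}, {0, 5, 6}} :
          Finset (Finset (Fin 7))))
        (fun v : Fin 7 => if v = 3 ∨ v = 4 then (1 : ZMod 2) else 0)
        (fun v : Fin 7 => if v = 0 then (0 : ZMod 2) else 1) := by
  refine ⟨by decide, ⟨fun e => if e = ({0, 1, 2} : Finset (Fin 7)) ∨ e = {0, 5, 6} then 1 else 0,
    by decide⟩, fun h => ?_⟩
  have := inv h
  revert this
  unfold P
  decide
end

section
/- In the complete graph K₄, let w₁ be the configuration with value 1 at a single vertex v and w₂ the configuration with value 1 at every vertex except v. Then the system H(w₁,w₂) has a GF(2) solution (z_e = 1 for every edge), yet w₂ is not reachable from w₁ under the annihilating-random-walk moves, because on a graph each move does not increase the number of vertices labeled 1, while w₁ has one 1 and w₂ has three. -/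
/-- Count of vertices labeled 1. -/
def onesCount (w : Fin 4 → ZMod 2) : ℕ :=
  (Finset.univ.filter (fun v => w v = 1)).card

lemma mono_aux : ∀ w w' : Fin 4 → ZMod 2,
    (∃ e ∈ ((Finset.univ : Finset (Finset (Fin 4))).filter (fun e => e.card = 2)),
      (∃ v ∈ e, w v = 1) ∧ w' = fun u => if u ∈ e then w u + 1 else w u) →
    onesCount w' ≤ onesCount w := by decide

lemma mono : ∀ w w' : Fin 4 → ZMod 2,
    flipMove ((Finset.univ : Finset (Finset (Fin 4))).filter (fun e => e.card = 2)) w w' →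
    onesCount w' ≤ onesCount w := mono_aux

/-- In the complete graph `K₄` (edges: all 2-element subsets of `Fin 4`), let `w₁` be 1
only at the vertex `0` and `w₂` be 1 at every vertex except `0`. Then `z_e = 1` for every
edge solves the system `H(w₁,w₂)`, yet `w₂` is not reachable from `w₁` under the
annihilating-random-walk moves. -/
theorem stmt_13 :
    (∀ v : Fin 4,
      ∑ _e ∈ (((Finset.univ : Finset (Finset (Fin 4))).filter
          (fun e => e.card = 2)).filter (fun e => v ∈ e)), (1 : ZMod 2) =
        (fun v : Fin 4 => if v = 0 then (0 : ZMod 2) else 1) v -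
        (fun v : Fin 4 => if v = 0 then (1 : ZMod 2) else 0) v) ∧
    ¬ Relation.ReflTransGen
        (flipMove ((Finset.univ : Finset (Finset (Fin 4))).filter (fun e => e.card = 2)))
        (fun v : Fin 4 => if v = 0 then (1 : ZMod 2) else 0)
        (fun v : Fin 4 => if v = 0 then (0 : ZMod 2) else 1) := by
  constructor
  · decide
  · intro h
    have key : ∀ w : Fin 4 → ZMod 2, Relation.ReflTransGen
        (flipMove ((Finset.univ : Finset (Finset (Fin 4))).filter (fun e => e.card = 2)))
        (fun v : Fin 4 => if v = 0 then (1 : ZMod 2) else 0) w →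
        onesCount w ≤ onesCount (fun v : Fin 4 => if v = 0 then (1 : ZMod 2) else 0) := by
      intro w hw
      induction hw with
      | refl => exact le_refl _
      | tail _ hstep ih => exact le_trans (mono _ _ hstep) ih
    have := key _ h
    revert this
    decide
end

section
/- Let H be an odd-connected hypergraph in which some hyperedge has odd size. Then in the two-party voter model on H, the all-zero state 0 is reachable from every initial state A. -/
/-- One move of the two-party voter model on a hypergraph: choose a vertex `i` and a
hyperedge `e ∋ i` and set `A_i` to the XOR of the labels of the other vertices of `e`. -/
def voterMove {V : Type*} [DecidableEq V] (E : Finset (Finset V))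
    (A A' : V → ZMod 2) : Prop :=
  ∃ i : V, ∃ e ∈ E, i ∈ e ∧ A' = Function.update A i (∑ j ∈ e.erase i, A j)

lemma sum_eq_card_filter {V : Type*} [DecidableEq V] (e : Finset V) (A : V → ZMod 2) :
    ∑ j ∈ e, A j = ((e.filter (fun j => A j = 1)).card : ZMod 2) := by
  rw [← Finset.sum_filter_add_sum_filter_not e (fun j => A j = 1)]
  have h1 : ∑ j ∈ e.filter (fun j => A j = 1), A j
      = ((e.filter (fun j => A j = 1)).card : ZMod 2) := by
    rw [Finset.sum_congr rfl (fun j hj => (Finset.mem_filter.mp hj).2), Finset.sum_const,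
      nsmul_eq_mul, mul_one]
  have h2 : ∑ j ∈ e.filter (fun j => ¬ A j = 1), A j = 0 := by
    apply Finset.sum_eq_zero
    intro j hj
    have := (Finset.mem_filter.mp hj).2
    have : ∀ x : ZMod 2, x ≠ 1 → x = 0 := by decide
    exact this _ (Finset.mem_filter.mp hj).2
  rw [h1, h2, add_zero]

lemma odd_cast {n : ℕ} (h : Odd n) : (n : ZMod 2) = 1 := by
  obtain ⟨k, rfl⟩ := h
  push_cast
  have : (2 : ZMod 2) = 0 := by decide
  rw [this]; ring

/-- If `H` is an odd-connected hypergraph (no set `B` with `∅ ≠ B ≠ V` meeting every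
hyperedge in an even number of vertices) having some hyperedge of odd size, then in the
two-party voter model on `H` the all-zero state is reachable from every initial state. -/
theorem stmt_15 {V : Type*} [Fintype V] [DecidableEq V]
    (E : Finset (Finset V))
    (hoddconn : ¬ ∃ B : Finset V, B ≠ ∅ ∧ B ≠ Finset.univ ∧
      ∀ e ∈ E, Even ((B ∩ e).card))
    (hodd : ∃ e ∈ E, Odd e.card) :
    ∀ A : V → ZMod 2,
      Relation.ReflTransGen (voterMove E) A (fun _ => 0) := by
  have key : ∀ n : ℕ, ∀ A : V → ZMod 2,
      (Finset.univ.filter (fun v => A v = 1)).card = n →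
      Relation.ReflTransGen (voterMove E) A (fun _ => 0) := by
    intro n
    induction n using Nat.strong_induction_on with
    | _ n ih =>
      intro A hA
      set B := Finset.univ.filter (fun v => A v = 1) with hB
      by_cases hB0 : B = ∅
      · have : A = (fun _ => 0) := by
          funext v
          have hv : v ∉ B := by simp [hB0]
          simp only [hB, Finset.mem_filter, Finset.mem_univ, true_and] at hv
          revert hv
          have : ∀ x : ZMod 2, x ≠ 1 → x = 0 := by decide
          exact this _
        rw [this]
      · -- find a hyperedge with odd intersection with B
        have he : ∃ e ∈ E, Odd ((B ∩ e).card) := by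
          by_cases hBu : B = Finset.univ
          · obtain ⟨e, heE, heodd⟩ := hodd
            exact ⟨e, heE, by rwa [hBu, Finset.univ_inter]⟩
          · push_neg at hoddconn
            obtain ⟨e, heE, hne⟩ := hoddconn B (Finset.nonempty_iff_ne_empty.mpr hB0) hBu
            exact ⟨e, heE, Nat.not_even_iff_odd.mp hne⟩
        obtain ⟨e, heE, heodd⟩ := he
        have hne : (B ∩ e).Nonempty := by
          rw [← Finset.card_pos]
          exact heodd.pos
        obtain ⟨i, hi⟩ := hne
        have hiB : i ∈ B := (Finset.mem_inter.mp hi).1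
        have hie : i ∈ e := (Finset.mem_inter.mp hi).2
        have hAi : A i = 1 := by
          have := Finset.mem_filter.mp (hB ▸ hiB)
          exact this.2
        -- the sum over e.erase i is 0
        have hfilter : e.filter (fun j => A j = 1) = B ∩ e := by
          ext j; simp [hB, Finset.mem_inter, Finset.mem_filter, and_comm]
        have hsum_e : ∑ j ∈ e, A j = 1 := by
          rw [sum_eq_card_filter, hfilter, odd_cast heodd]
        have hsum : ∑ j ∈ e.erase i, A j = 0 := by
          have := Finset.add_sum_erase e A hie
          have h2 : A i + ∑ j ∈ e.erase i, A j = 1 := by rw [this, hsum_e]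
          rw [hAi] at h2
          have : ∀ x : ZMod 2, 1 + x = 1 → x = 0 := by decide
          exact this _ h2
        set A' := Function.update A i (∑ j ∈ e.erase i, A j) with hA'
        have hmove : voterMove E A A' := ⟨i, e, heE, hie, rfl⟩
        have hA'i : A' i = 0 := by rw [hA', hsum]; simp
        have hsupp : Finset.univ.filter (fun v => A' v = 1) = B.erase i := by
          ext v
          simp only [Finset.mem_filter, Finset.mem_univ, true_and, Finset.mem_erase, hB]
          by_cases hv : v = i
          · subst hv
            simp [hA'i]
          · rw [hA', Function.update_of_ne hv]
            simp [hv]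
        have hlt : (B.erase i).card < n := by
          rw [← hA]
          exact Finset.card_erase_lt_of_mem hiB
        exact Relation.ReflTransGen.head hmove
          (ih _ (hsupp ▸ hlt) A' (by rw [hsupp]))
  intro A
  exact key _ A rfl
end
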